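/- Let S ⊆ R^d be a set such that no generalized arithmetic progression of the form {b + ε_1v_1 + ... + ε_mv_m : ε_i ∈ {0,1}} with all v_i ≠ 0 is contained in S. Then for all n, all nonzero a_1,...,a_n ∈ R^d, and i.i.d. Rademacher ξ_1,...,ξ_n, we have Pr(a_1ξ_1+...+a_nξ_n ∈ S) ≤ C_m · ρ^{1/(m·2^{m−1})}, where ρ = max_{x∈R^d} Pr(a_1ξ_1+...+a_nξ_n = x) and C_m depends only on m. -/

import Mathlib

open Finset
open scoped Classical

noncomputable def rprob {n : ℕ} (P : (Fin n → Bool) → Prop) : ℝ :=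
  ((Finset.univ : Finset (Fin n → Bool)).filter P).card / 2 ^ n

noncomputable def radSumOn {n d : ℕ} (a : Fin n → EuclideanSpace ℝ (Fin d))
    (I : Finset (Fin n)) (ε : Fin n → Bool) : EuclideanSpace ℝ (Fin d) :=
  ∑ i ∈ I, (if ε i then (1 : ℝ) else -1) • a i

noncomputable def radSum {n d : ℕ} (a : Fin n → EuclideanSpace ℝ (Fin d))
    (ε : Fin n → Bool) : EuclideanSpace ℝ (Fin d) :=
  radSumOn a Finset.univ ε

noncomputable def rhoOn {n d : ℕ} (a : Fin n → EuclideanSpace ℝ (Fin d))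
    (I : Finset (Fin n)) : ℝ :=
  sSup {p : ℝ | ∃ x, p = rprob (fun ε => radSumOn a I ε = x)}

namespace Stmt12Aux

noncomputable def ind (P : Prop) : ℝ := if P then 1 else 0

lemma ind_nonneg {P : Prop} : 0 ≤ ind P := by unfold ind; split <;> norm_num

lemma ind_le_one {P : Prop} : ind P ≤ 1 := by unfold ind; split <;> norm_num

lemma ind_mul_ind (P Q : Prop) : ind P * ind Q = ind (P ∧ Q) := by
  unfold ind; by_cases hP : P <;> by_cases hQ : Q <;> simp [hP, hQ]

lemma ind_mono {P Q : Prop} (h : P → Q) : ind P ≤ ind Q := by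
  unfold ind
  by_cases hP : P
  · simp [hP, h hP]
  · simp [hP]; split <;> norm_num

lemma ind_congr {P Q : Prop} (h : P ↔ Q) : ind P = ind Q := by
  unfold ind; simp [h]

lemma sum_ind {α : Type*} [Fintype α] (p : α → Prop) :
    ∑ x, ind (p x) = ((Finset.univ.filter p).card : ℝ) := by
  unfold ind
  rw [Finset.sum_boole]

variable {n d : ℕ}

lemma card_V : (Fintype.card (Fin n → Bool) : ℝ) = 2 ^ n := by
  simp [Fintype.card_fun]

/-- override `ε` on `I` by `δ`. -/
def ov (I : Finset (Fin n)) (ε δ : Fin n → Bool) : Fin n → Bool :=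
  fun i => if i ∈ I then δ i else ε i

lemma ov_mem {I : Finset (Fin n)} {i : Fin n} (h : i ∈ I) (ε δ : Fin n → Bool) :
    ov I ε δ i = δ i := if_pos h

lemma ov_not_mem {I : Finset (Fin n)} {i : Fin n} (h : i ∉ I) (ε δ : Fin n → Bool) :
    ov I ε δ i = ε i := if_neg h

lemma ov_ov (I : Finset (Fin n)) (ε w δ w' : Fin n → Bool) :
    ov I (ov I ε w) (ov I δ w') = ov I ε w' := by
  funext i
  by_cases h : i ∈ I <;> simp [ov, h]

lemma ov_invol (I : Finset (Fin n)) :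
    Function.Involutive (fun z : (Fin n → Bool) × (Fin n → Bool) =>
      (ov I z.1 z.2, ov I z.2 z.1)) := by
  intro z
  ext i <;> by_cases h : i ∈ I <;> simp [ov, h]

/-- The master resampling identity. -/
lemma sum_ov (I : Finset (Fin n)) (g : (Fin n → Bool) → ℝ) :
    ∑ ε : Fin n → Bool, ∑ δ : Fin n → Bool, g (ov I ε δ) = 2 ^ n * ∑ ε, g ε := by
  have h1 : ∑ ε : Fin n → Bool, ∑ δ : Fin n → Bool, g (ov I ε δ)
      = ∑ z : (Fin n → Bool) × (Fin n → Bool), g (ov I z.1 z.2) :=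
    (Fintype.sum_prod_type
      (f := fun z : (Fin n → Bool) × (Fin n → Bool) => g (ov I z.1 z.2))).symm
  set e := (ov_invol (n := n) I).toPerm with he
  have h2 : ∑ z : (Fin n → Bool) × (Fin n → Bool), g (ov I z.1 z.2)
      = ∑ z : (Fin n → Bool) × (Fin n → Bool), g z.1 := by
    have h3 := Equiv.sum_comp e (fun z : (Fin n → Bool) × (Fin n → Bool) => g z.1)
    have h4 : ∀ z : (Fin n → Bool) × (Fin n → Bool),
        g (e z).1 = g (ov I z.1 z.2) := fun z => rfl
    rw [← h3]
    exact Finset.sum_congr rfl (fun z _ => h4 z)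
  rw [h1, h2, Fintype.sum_prod_type]
  have : ∀ x : Fin n → Bool, ∑ _δ : Fin n → Bool, g x = 2 ^ n * g x := by
    intro x
    rw [Finset.sum_const, Finset.card_univ, nsmul_eq_mul, card_V]
  rw [Finset.sum_congr rfl (fun x _ => this x), ← Finset.mul_sum]

section Rho

variable (a : Fin n → EuclideanSpace ℝ (Fin d))

lemma rprob_nonneg (P : (Fin n → Bool) → Prop) : 0 ≤ rprob P := by
  unfold rprob; positivity

lemma rprob_le_one (P : (Fin n → Bool) → Prop) : rprob P ≤ 1 := by
  unfold rprob
  rw [div_le_one (by positivity)]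
  calc ((Finset.univ.filter P).card : ℝ) ≤ ((Finset.univ : Finset (Fin n → Bool)).card : ℝ) := by
        exact_mod_cast Finset.card_filter_le _ _
    _ = 2 ^ n := by rw [Finset.card_univ]; exact card_V
 
lemma rprob_pos {P : (Fin n → Bool) → Prop} (h : ∃ ε, P ε) : 0 < rprob P := by
  obtain ⟨ε, hε⟩ := h
  unfold rprob
  apply div_pos _ (by positivity)
  have : ε ∈ Finset.univ.filter P := Finset.mem_filter.2 ⟨Finset.mem_univ _, hε⟩
  exact_mod_cast Finset.card_pos.2 ⟨ε, this⟩

lemma radSumOn_congr (I : Finset (Fin n)) {ε ε' : Fin n → Bool}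
    (h : ∀ i ∈ I, ε i = ε' i) : radSumOn a I ε = radSumOn a I ε' :=
  Finset.sum_congr rfl (fun i hi => by rw [h i hi])

lemma rhoSet_finite (I : Finset (Fin n)) :
    {p : ℝ | ∃ x, p = rprob (fun ε => radSumOn a I ε = x)}.Finite := by
  apply Set.Finite.subset
    (Set.Finite.insert 0 (Set.finite_range
      (fun ε₀ : Fin n → Bool => rprob (fun ε => radSumOn a I ε = radSumOn a I ε₀))))
  rintro p ⟨x, rfl⟩
  by_cases h : ∃ ε₀ : Fin n → Bool, radSumOn a I ε₀ = x
  · obtain ⟨ε₀, hε₀⟩ := h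
    exact Set.mem_insert_iff.2 (Or.inr ⟨ε₀, by dsimp only; rw [hε₀]⟩)
  · left
    unfold rprob
    have : Finset.univ.filter (fun ε => radSumOn a I ε = x) = ∅ := by
      apply Finset.filter_eq_empty_iff.2
      intro ε _
      exact fun hc => h ⟨ε, hc⟩
    rw [Finset.filter_congr_decidable, this]
    simp

lemma rhoSet_nonempty (I : Finset (Fin n)) :
    {p : ℝ | ∃ x, p = rprob (fun ε => radSumOn a I ε = x)}.Nonempty :=
  ⟨_, ⟨0, rfl⟩⟩

lemma rprob_le_rhoOn (I : Finset (Fin n)) (x : EuclideanSpace ℝ (Fin d)) :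
    rprob (fun ε => radSumOn a I ε = x) ≤ rhoOn a I :=
  le_csSup ((rhoSet_finite a I).bddAbove) ⟨x, rfl⟩

lemma exists_rhoOn_eq (I : Finset (Fin n)) :
    ∃ x, rhoOn a I = rprob (fun ε => radSumOn a I ε = x) :=
  (rhoSet_nonempty a I).csSup_mem (rhoSet_finite a I)

lemma rhoOn_pos (I : Finset (Fin n)) : 0 < rhoOn a I := by
  have h := rprob_le_rhoOn a I (radSumOn a I (fun _ => false))
  have h2 : 0 < rprob (fun ε => radSumOn a I ε = radSumOn a I (fun _ => false)) :=
    rprob_pos ⟨fun _ => false, rfl⟩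
  exact lt_of_lt_of_le h2 h

lemma rhoOn_le_one (I : Finset (Fin n)) : rhoOn a I ≤ 1 := by
  apply csSup_le (rhoSet_nonempty a I)
  rintro p ⟨x, rfl⟩
  exact rprob_le_one _

lemma one_le_rhoOn_empty : (1 : ℝ) ≤ rhoOn a ∅ := by
  have h := rprob_le_rhoOn a ∅ 0
  refine le_trans ?_ h
  unfold rprob
  have : Finset.univ.filter (fun ε : Fin n → Bool => radSumOn a ∅ ε = 0) = Finset.univ := by
    apply Finset.filter_eq_self.2
    intro ε _
    simp [radSumOn]
  rw [Finset.filter_congr_decidable, this, Finset.card_univ]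
  rw [le_div_iff₀ (by positivity), one_mul]
  exact le_of_eq card_V.symm

/-- count form of the atom bound -/
lemma card_atom_le (I : Finset (Fin n)) (x : EuclideanSpace ℝ (Fin d)) :
    ((Finset.univ.filter (fun ε => radSumOn a I ε = x)).card : ℝ) ≤ rhoOn a I * 2 ^ n := by
  have h := rprob_le_rhoOn a I x
  unfold rprob at h
  rw [div_le_iff₀ (by positivity)] at h
  rw [Finset.filter_congr_decidable] at h
  exact h

lemma rhoOn_mul_le {I J : Finset (Fin n)} (hd : Disjoint I J) :
    rhoOn a I * rhoOn a J ≤ rhoOn a (I ∪ J) := by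
  obtain ⟨x₀, hx₀⟩ := exists_rhoOn_eq a I
  obtain ⟨y₀, hy₀⟩ := exists_rhoOn_eq a J
  set A := Finset.univ.filter (fun ε => radSumOn a I ε = x₀) with hA
  set B := Finset.univ.filter (fun ε => radSumOn a J ε = y₀) with hB
  set Cs := Finset.univ.filter (fun ε => radSumOn a (I ∪ J) ε = x₀ + y₀) with hC
  have key : (A.card : ℝ) * B.card ≤ Cs.card * 2 ^ n := by
    have hinj : Set.InjOn (fun z : (Fin n → Bool) × (Fin n → Bool) =>
        (ov J z.1 z.2, ov J z.2 z.1)) (A ×ˢ B : Finset _) := by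
      intro z1 _ z2 _ h
      have := congrArg (fun z : (Fin n → Bool) × (Fin n → Bool) =>
        (ov J z.1 z.2, ov J z.2 z.1)) h
      simpa [ov_invol J z1, ov_invol J z2] using this
    have hmaps : ∀ z ∈ (A ×ˢ B : Finset _),
        (ov J z.1 z.2, ov J z.2 z.1) ∈ (Cs ×ˢ (Finset.univ : Finset (Fin n → Bool))) := by
      rintro ⟨ε, δ⟩ hz
      rw [Finset.mem_product] at hz
      obtain ⟨hε, hδ⟩ := hz
      rw [hA, Finset.mem_filter] at hε
      rw [hB, Finset.mem_filter] at hδ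
      rw [Finset.mem_product]
      refine ⟨?_, Finset.mem_univ _⟩
      rw [hC, Finset.mem_filter]
      refine ⟨Finset.mem_univ _, ?_⟩
      have h1 : radSumOn a (I ∪ J) (ov J ε δ)
          = radSumOn a I (ov J ε δ) + radSumOn a J (ov J ε δ) := by
        unfold radSumOn
        exact Finset.sum_union hd
      have h2 : radSumOn a I (ov J ε δ) = radSumOn a I ε := by
        apply radSumOn_congr
        intro i hi
        exact ov_not_mem (Finset.disjoint_left.1 hd hi) _ _
      have h3 : radSumOn a J (ov J ε δ) = radSumOn a J δ := by
        apply radSumOn_congr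
        intro i hi
        exact ov_mem hi _ _
      rw [h1, h2, h3, hε.2, hδ.2]
    have hcard := Finset.card_le_card_of_injOn _ hmaps hinj
    rw [Finset.card_product, Finset.card_product, Finset.card_univ] at hcard
    calc (A.card : ℝ) * B.card = ((A.card * B.card : ℕ) : ℝ) := by push_cast; ring
      _ ≤ ((Cs.card * Fintype.card (Fin n → Bool) : ℕ) : ℝ) := by exact_mod_cast hcard
      _ = Cs.card * 2 ^ n := by rw [Nat.cast_mul, card_V]
  have hfin : rprob (fun ε => radSumOn a (I ∪ J) ε = x₀ + y₀) ≤ rhoOn a (I ∪ J) :=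
    rprob_le_rhoOn a _ _
  rw [hx₀, hy₀]
  refine le_trans ?_ hfin
  unfold rprob
  rw [div_mul_div_comm, div_le_div_iff₀ (by positivity) (by positivity)]
  rw [Finset.filter_congr_decidable _ (fun ε => radSumOn a I ε = x₀),
    Finset.filter_congr_decidable _ (fun ε => radSumOn a J ε = y₀),
    Finset.filter_congr_decidable _ (fun ε => radSumOn a (I ∪ J) ε = x₀ + y₀)]
  calc (A.card : ℝ) * B.card * 2 ^ n ≤ (Cs.card * 2 ^ n) * 2 ^ n := by
        apply mul_le_mul_of_nonneg_right key (by positivity)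
    _ = Cs.card * (2 ^ n * 2 ^ n) := by ring

lemma rhoOn_erase_le {I : Finset (Fin n)} {i : Fin n} (hi : i ∈ I) :
    rhoOn a (I.erase i) ≤ 2 * rhoOn a I := by
  apply csSup_le (rhoSet_nonempty a _)
  rintro p ⟨x, rfl⟩
  have hsub : Finset.univ.filter (fun ε => radSumOn a (I.erase i) ε = x)
      ⊆ (Finset.univ.filter (fun ε => radSumOn a I ε = x + a i))
        ∪ (Finset.univ.filter (fun ε => radSumOn a I ε = x - a i)) := by
    intro ε hε
    rw [Finset.mem_filter] at hε
    have hsplit : radSumOn a I ε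
        = (if ε i then (1:ℝ) else -1) • a i + radSumOn a (I.erase i) ε := by
      unfold radSumOn
      exact (Finset.add_sum_erase I _ hi).symm
    rw [Finset.mem_union, Finset.mem_filter, Finset.mem_filter]
    by_cases hb : ε i
    · left
      refine ⟨Finset.mem_univ _, ?_⟩
      rw [hsplit, hε.2, hb]
      simp
      abel
    · right
      refine ⟨Finset.mem_univ _, ?_⟩
      rw [hsplit, hε.2]
      simp [hb]
      abel
  have hcard := Finset.card_le_card hsub
  have hcard2 := Finset.card_union_le
    (Finset.univ.filter (fun ε => radSumOn a I ε = x + a i))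
    (Finset.univ.filter (fun ε => radSumOn a I ε = x - a i))
  unfold rprob
  rw [div_le_iff₀ (by positivity)]
  rw [Finset.filter_congr_decidable]
  calc ((Finset.univ.filter (fun ε => radSumOn a (I.erase i) ε = x)).card : ℝ)
      ≤ ((Finset.univ.filter (fun ε => radSumOn a I ε = x + a i)).card : ℝ)
        + ((Finset.univ.filter (fun ε => radSumOn a I ε = x - a i)).card : ℝ) := by
        exact_mod_cast le_trans hcard hcard2
    _ ≤ rhoOn a I * 2 ^ n + rhoOn a I * 2 ^ n := by
        exact add_le_add (card_atom_le a I _) (card_atom_le a I _)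
    _ = 2 * rhoOn a I * 2 ^ n := by ring

end Rho

section Split

variable (a : Fin n → EuclideanSpace ℝ (Fin d))

lemma split_lemma : ∀ (k' : ℕ) (I : Finset (Fin n)) (t : ℝ), 0 < t → 2 * t < 1 →
    rhoOn a I ≤ t ^ (k' + 1) →
    ∃ J : Fin (k' + 1) → Finset (Fin n),
      (∀ p q, p ≠ q → Disjoint (J p) (J q)) ∧ (∀ i ∈ I, ∃ p, i ∈ J p) ∧
      (∀ p, J p ⊆ I) ∧ (∀ p, rhoOn a (J p) ≤ 2 * t) := by
  intro k'
  induction k' with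
  | zero =>
    intro I t ht ht1 hI
    refine ⟨fun _ => I, ?_, fun i hi => ⟨0, hi⟩, fun _ => le_refl _, fun _ => ?_⟩
    · intro p q hpq
      simp [Fin.fin_one_eq_zero p, Fin.fin_one_eq_zero q] at hpq
    · rw [pow_one] at hI
      nlinarith
  | succ k ih =>
    intro I t ht ht1 hI
    have ht2 : t < 1 := by nlinarith
    -- the set of candidate first parts
    have hImem : I ∈ (I.powerset.filter (fun J' => rhoOn a J' ≤ 2 * t)) := by
      rw [Finset.mem_filter, Finset.mem_powerset]
      refine ⟨le_refl _, ?_⟩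
      calc rhoOn a I ≤ t ^ (k + 1 + 1) := hI
        _ ≤ t ^ 1 := pow_le_pow_of_le_one (le_of_lt ht) (le_of_lt ht2) (by omega)
        _ = t := pow_one t
        _ ≤ 2 * t := by nlinarith
    obtain ⟨J₀, hJ₀mem, hJ₀min⟩ := Finset.exists_min_image _ Finset.card ⟨I, hImem⟩
    rw [Finset.mem_filter, Finset.mem_powerset] at hJ₀mem
    obtain ⟨hJ₀I, hJ₀rho⟩ := hJ₀mem
    have hJ₀ne : J₀.Nonempty := by
      rw [Finset.nonempty_iff_ne_empty]
      intro hc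
      rw [hc] at hJ₀rho
      have := one_le_rhoOn_empty a
      linarith
    obtain ⟨i₀, hi₀⟩ := hJ₀ne
    -- minimality gives a lower bound on rhoOn a J₀
    have herase : ¬ (rhoOn a (J₀.erase i₀) ≤ 2 * t) := by
      intro hc
      have hmem : J₀.erase i₀ ∈ (I.powerset.filter (fun J' => rhoOn a J' ≤ 2 * t)) := by
        rw [Finset.mem_filter, Finset.mem_powerset]
        exact ⟨le_trans (Finset.erase_subset _ _) hJ₀I, hc⟩
      have := hJ₀min _ hmem
      have hlt : (J₀.erase i₀).card < J₀.card := Finset.card_erase_lt_of_mem hi₀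
      omega
    have hJ₀lower : t < rhoOn a J₀ := by
      have h1 : rhoOn a (J₀.erase i₀) ≤ 2 * rhoOn a J₀ := rhoOn_erase_le a hi₀
      push_neg at herase
      linarith
    -- bound on the rest
    have hrest : rhoOn a (I \ J₀) ≤ t ^ (k + 1) := by
      have hdisj : Disjoint J₀ (I \ J₀) := Finset.disjoint_sdiff
      have hunion : J₀ ∪ (I \ J₀) = I := Finset.union_sdiff_of_subset hJ₀I
      have hmul : rhoOn a J₀ * rhoOn a (I \ J₀) ≤ rhoOn a I := by
        have := rhoOn_mul_le a hdisj
        rwa [hunion] at this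
      have h2 : rhoOn a J₀ * rhoOn a (I \ J₀) ≤ t ^ (k + 1) * t := by
        calc rhoOn a J₀ * rhoOn a (I \ J₀) ≤ rhoOn a I := hmul
          _ ≤ t ^ (k + 1 + 1) := hI
          _ = t ^ (k + 1) * t := by ring
      have h3 : t ^ (k + 1) * t ≤ t ^ (k + 1) * rhoOn a J₀ := by
        apply mul_le_mul_of_nonneg_left (le_of_lt hJ₀lower) (by positivity)
      have h4 : rhoOn a J₀ * rhoOn a (I \ J₀) ≤ rhoOn a J₀ * t ^ (k + 1) := by
        calc rhoOn a J₀ * rhoOn a (I \ J₀) ≤ t ^ (k + 1) * rhoOn a J₀ := le_trans h2 h3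
          _ = rhoOn a J₀ * t ^ (k + 1) := by ring
      exact le_of_mul_le_mul_left h4 (lt_trans ht hJ₀lower)
    obtain ⟨J', hdisj', hcov', hsub', hrho'⟩ := ih (I \ J₀) t ht ht1 hrest
    refine ⟨Fin.cons J₀ J', ?_, ?_, ?_, ?_⟩
    · intro p q hpq
      induction p using Fin.cases with
      | zero =>
        induction q using Fin.cases with
        | zero => exact absurd rfl hpq
        | succ q' =>
          simp only [Fin.cons_zero, Fin.cons_succ]
          exact Finset.disjoint_of_subset_right (hsub' q') Finset.disjoint_sdiff
      | succ p' =>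
        induction q using Fin.cases with
        | zero =>
          simp only [Fin.cons_zero, Fin.cons_succ]
          exact Finset.disjoint_of_subset_left (hsub' p') Finset.sdiff_disjoint
        | succ q' =>
          simp only [Fin.cons_succ]
          exact hdisj' p' q' (fun hc => hpq (by rw [hc]))
    · intro i hi
      by_cases hmem : i ∈ J₀
      · exact ⟨0, hmem⟩
      · obtain ⟨p, hp⟩ := hcov' i (Finset.mem_sdiff.2 ⟨hi, hmem⟩)
        exact ⟨p.succ, by simpa using hp⟩
    · refine Fin.cases ?_ ?_
      · simpa using hJ₀I
      · intro p'
        simpa using le_trans (hsub' p') (Finset.sdiff_subset)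
    · refine Fin.cases ?_ ?_
      · simpa using hJ₀rho
      · intro p'
        simpa using hrho' p'

end Split

section Main

variable {m : ℕ}

def part (c : Fin n → Fin m) (k : Fin m) : Finset (Fin n) :=
  Finset.univ.filter (fun i => c i = k)

noncomputable def XS (a : Fin n → EuclideanSpace ℝ (Fin d)) (c : Fin n → Fin m) (k : Fin m)
    (ε : Fin n → Bool) : EuclideanSpace ℝ (Fin d) :=
  radSumOn a (part c k) ε

def Hyb (c : Fin n → Fin m) (ε δ : Fin n → Bool) (b : Fin m → Bool) : Fin n → Bool :=
  fun i => if b (c i) then δ i else ε i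

def AA (a : Fin n → EuclideanSpace ℝ (Fin d)) (c : Fin n → Fin m)
    (S : Set (EuclideanSpace ℝ (Fin d))) (j : ℕ) (ε δ : Fin n → Bool) : Prop :=
  ∀ b : Fin m → Bool, (∀ k, b k = true → (k : ℕ) < j) → radSum a (Hyb c ε δ b) ∈ S

noncomputable def TT (a : Fin n → EuclideanSpace ℝ (Fin d)) (c : Fin n → Fin m)
    (S : Set (EuclideanSpace ℝ (Fin d))) (j : ℕ) : ℝ :=
  ∑ ε : Fin n → Bool, ∑ δ : Fin n → Bool, ind (AA a c S j ε δ)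

variable (a : Fin n → EuclideanSpace ℝ (Fin d)) (c : Fin n → Fin m)
  (S : Set (EuclideanSpace ℝ (Fin d)))

lemma radSum_eq_sum_XS (ε : Fin n → Bool) : radSum a ε = ∑ k, XS a c k ε := by
  unfold radSum radSumOn XS radSumOn part
  exact (Finset.sum_fiberwise Finset.univ c _).symm

lemma XS_congr (k : Fin m) {ε ε' : Fin n → Bool} (h : ∀ i, c i = k → ε i = ε' i) :
    XS a c k ε = XS a c k ε' := by
  apply radSumOn_congr
  intro i hi
  rw [part, Finset.mem_filter] at hi
  exact h i hi.2

lemma radSum_Hyb (ε δ : Fin n → Bool) (b : Fin m → Bool) :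
    radSum a (Hyb c ε δ b) = ∑ k, XS a c k (if b k then δ else ε) := by
  rw [radSum_eq_sum_XS a c]
  apply Finset.sum_congr rfl
  intro k _
  apply XS_congr
  intro i hci
  show (if b (c i) then δ i else ε i) = _
  rw [hci]
  by_cases hb : b k <;> simp [hb]

lemma AA_imp_F {j : ℕ} {ε δ : Fin n → Bool} (h : AA a c S j ε δ) : radSum a ε ∈ S := by
  have h2 := h (fun _ => false) (fun k hk => by simp at hk)
  have : Hyb c ε δ (fun _ => false) = ε := by
    funext i
    simp [Hyb]
  rwa [this] at h2

lemma AA_zero (ε δ : Fin n → Bool) : AA a c S 0 ε δ ↔ radSum a ε ∈ S := by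
  constructor
  · exact AA_imp_F a c S
  · intro h b hb
    have : Hyb c ε δ b = ε := by
      funext i
      have : b (c i) = false := by
        cases hbc : b (c i)
        · rfl
        · exact absurd (hb _ hbc) (by omega)
      simp [Hyb, this]
    rwa [this]

lemma TT_zero : TT a c S 0
    = 2 ^ n * ((Finset.univ.filter (fun ε => radSum a ε ∈ S)).card : ℝ) := by
  unfold TT
  rw [← sum_ind (fun ε => radSum a ε ∈ S)]
  rw [Finset.sum_comm]
  have : ∀ δ : Fin n → Bool, ∑ ε : Fin n → Bool, ind (AA a c S 0 ε δ)
      = ∑ ε : Fin n → Bool, ind (radSum a ε ∈ S) := by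
    intro δ
    exact Finset.sum_congr rfl (fun ε _ => ind_congr (AA_zero a c S ε δ))
  rw [Finset.sum_congr rfl (fun δ _ => this δ)]
  rw [Finset.sum_const, Finset.card_univ, nsmul_eq_mul, card_V]

lemma Hyb_ov_indep {j : ℕ} {jf : Fin m} (hjf : j ≤ (jf : ℕ)) (ε δ w : Fin n → Bool)
    (b : Fin m → Bool) (hb : ∀ k, b k = true → (k : ℕ) < j) :
    Hyb c ε (ov (part c jf) δ w) b = Hyb c ε δ b := by
  funext i
  show (if b (c i) then ov (part c jf) δ w i else ε i) = (if b (c i) then δ i else ε i)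
  by_cases hbi : b (c i)
  · simp only [hbi, if_true]
    apply ov_not_mem
    rw [part, Finset.mem_filter]
    rintro ⟨-, hci⟩
    have := hb _ hbi
    rw [hci] at this
    omega
  · simp [hbi]

lemma AA_ov_indep {j : ℕ} {jf : Fin m} (hjf : j ≤ (jf : ℕ)) (ε δ w : Fin n → Bool) :
    AA a c S j ε (ov (part c jf) δ w) ↔ AA a c S j ε δ := by
  unfold AA
  apply forall_congr'
  intro b
  constructor
  · intro h hb
    rw [← Hyb_ov_indep c hjf ε δ w b hb]
    exact h hb
  · intro h hb
    rw [Hyb_ov_indep c hjf ε δ w b hb]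
    exact h hb

lemma AA_succ (jf : Fin m) (ε δ : Fin n → Bool) :
    AA a c S ((jf : ℕ) + 1) ε δ ↔
      AA a c S (jf : ℕ) ε δ ∧ AA a c S (jf : ℕ) (ov (part c jf) ε δ) δ := by
  constructor
  · intro h
    constructor
    · intro b hb
      exact h b (fun k hk => Nat.lt_succ_of_lt (hb k hk))
    · intro b hb
      have heq : Hyb c (ov (part c jf) ε δ) δ b
          = Hyb c ε δ (fun k => b k || decide (k = jf)) := by
        funext i
        by_cases hci : c i = jf
        · have hbci : b (c i) = false := by
            cases hbc : b (c i)
            · rfl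
            · have := hb _ hbc
              rw [hci] at this
              omega
          have himem : i ∈ part c jf := by
            rw [part, Finset.mem_filter]
            exact ⟨Finset.mem_univ _, hci⟩
          show (if b (c i) then δ i else ov (part c jf) ε δ i)
              = (if (b (c i) || decide (c i = jf)) then δ i else ε i)
          rw [hbci, hci]
          simp [ov_mem himem]
        · have hni : i ∉ part c jf := by
            rw [part, Finset.mem_filter]
            rintro ⟨-, hc⟩
            exact hci hc
          show (if b (c i) then δ i else ov (part c jf) ε δ i)
              = (if (b (c i) || decide (c i = jf)) then δ i else ε i)
          have hd : decide (c i = jf) = false := by simp [hci]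
          rw [hd, Bool.or_false]
          by_cases hbc : b (c i) <;> simp [hbc, ov_not_mem hni]
      rw [heq]
      apply h
      intro k hk
      rcases Bool.or_eq_true_iff.1 hk with hk1 | hk2
      · exact Nat.lt_succ_of_lt (hb _ hk1)
      · have : k = jf := of_decide_eq_true hk2
        rw [this]
        omega
  · rintro ⟨h1, h2⟩ b hb
    by_cases hbj : b jf = true
    · have heq : Hyb c ε δ b
          = Hyb c (ov (part c jf) ε δ) δ (fun k => b k && !(decide (k = jf))) := by
        funext i
        by_cases hci : c i = jf
        · have himem : i ∈ part c jf := by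
            rw [part, Finset.mem_filter]
            exact ⟨Finset.mem_univ _, hci⟩
          show (if b (c i) then δ i else ε i)
              = (if (b (c i) && !(decide (c i = jf))) then δ i else ov (part c jf) ε δ i)
          rw [hci, hbj]
          simp [ov_mem himem]
        · have hni : i ∉ part c jf := by
            rw [part, Finset.mem_filter]
            rintro ⟨-, hc⟩
            exact hci hc
          show (if b (c i) then δ i else ε i)
              = (if (b (c i) && !(decide (c i = jf))) then δ i else ov (part c jf) ε δ i)
          have hd : decide (c i = jf) = false := by simp [hci]
          rw [hd]
          by_cases hbc : b (c i) <;> simp [hbc, ov_not_mem hni]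
      rw [heq]
      apply h2
      intro k hk
      rcases Bool.and_eq_true_iff.1 hk with ⟨hk1, hk2⟩
      have hkne : k ≠ jf := by
        intro hc
        rw [hc] at hk2
        simp at hk2
      have h3 := hb _ hk1
      have h4 : (k : ℕ) ≠ (jf : ℕ) := fun hc => hkne (Fin.ext hc)
      omega
    · apply h1
      intro k hk
      have h3 := hb _ hk
      have hkne : k ≠ jf := by
        intro hc
        rw [hc] at hk
        exact hbj hk
      have h4 : (k : ℕ) ≠ (jf : ℕ) := fun hc => hkne (Fin.ext hc)
      omega

end Main

section Step

variable {m : ℕ}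
variable (a : Fin n → EuclideanSpace ℝ (Fin d)) (c : Fin n → Fin m)
  (S : Set (EuclideanSpace ℝ (Fin d)))

lemma double_CS (G : (Fin n → Bool) → (Fin n → Bool) → ℝ) :
    (∑ ε : Fin n → Bool, ∑ δ : Fin n → Bool, G ε δ) ^ 2
      ≤ ((2:ℝ) ^ n) ^ 2 * ∑ ε : Fin n → Bool, ∑ δ : Fin n → Bool, (G ε δ) ^ 2 := by
  have h1 : ∑ ε : Fin n → Bool, ∑ δ : Fin n → Bool, G ε δ
      = ∑ z : (Fin n → Bool) × (Fin n → Bool), G z.1 z.2 :=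
    (Fintype.sum_prod_type (f := fun z : (Fin n → Bool) × (Fin n → Bool) => G z.1 z.2)).symm
  have h2 : ∑ ε : Fin n → Bool, ∑ δ : Fin n → Bool, (G ε δ) ^ 2
      = ∑ z : (Fin n → Bool) × (Fin n → Bool), (G z.1 z.2) ^ 2 :=
    (Fintype.sum_prod_type
      (f := fun z : (Fin n → Bool) × (Fin n → Bool) => (G z.1 z.2) ^ 2)).symm
  rw [h1, h2]
  have h3 := sq_sum_le_card_mul_sum_sq
    (s := (Finset.univ : Finset ((Fin n → Bool) × (Fin n → Bool))))
    (f := fun z => G z.1 z.2)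
  have h4 : ((Finset.univ : Finset ((Fin n → Bool) × (Fin n → Bool))).card : ℝ)
      = ((2:ℝ) ^ n) ^ 2 := by
    rw [Finset.card_univ, Fintype.card_prod]
    push_cast
    simp [Fintype.card_fun]
    ring
  exact le_of_le_of_eq h3 (by rw [h4])

set_option maxHeartbeats 1000000 in
lemma TT_step (jf : Fin m) :
    (TT a c S (jf : ℕ)) ^ 2 ≤ ((2:ℝ) ^ n) ^ 2 * TT a c S ((jf : ℕ) + 1) := by
  set j := (jf : ℕ) with hj
  set I := part c jf with hI
  set h : (Fin n → Bool) → (Fin n → Bool) → ℝ := fun ε δ => ind (AA a c S j ε δ) with hh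
  set G : (Fin n → Bool) → (Fin n → Bool) → ℝ :=
    fun ε δ => ∑ w : Fin n → Bool, h (ov I ε w) δ with hG
  -- Step A : total mass of G
  have stepA : ∑ ε : Fin n → Bool, ∑ δ : Fin n → Bool, G ε δ = 2 ^ n * TT a c S j := by
    rw [Finset.sum_comm]
    have h1 : ∀ δ : Fin n → Bool, ∑ ε : Fin n → Bool, G ε δ
        = 2 ^ n * ∑ α : Fin n → Bool, h α δ := by
      intro δ
      exact sum_ov I (fun α => h α δ)
    rw [Finset.sum_congr rfl (fun δ _ => h1 δ), ← Finset.mul_sum]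
    rw [Finset.sum_comm]
    rfl
  -- pointwise identity for products
  have hpoint : ∀ ε δ w w' : Fin n → Bool,
      h (ov I ε w) δ * h (ov I ε w') δ = ind (AA a c S (j + 1) (ov I ε w) (ov I δ w')) := by
    intro ε δ w w'
    have e1 : AA a c S (j+1) (ov I ε w) (ov I δ w')
        ↔ AA a c S j (ov I ε w) (ov I δ w') ∧ AA a c S j (ov I ε w') (ov I δ w') := by
      rw [AA_succ a c S jf (ov I ε w) (ov I δ w')]
      rw [ov_ov]
    have e2 : AA a c S j (ov I ε w) (ov I δ w') ↔ AA a c S j (ov I ε w) δ :=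
      AA_ov_indep a c S (le_refl j) _ δ w'
    have e3 : AA a c S j (ov I ε w') (ov I δ w') ↔ AA a c S j (ov I ε w') δ :=
      AA_ov_indep a c S (le_refl j) _ δ w'
    rw [ind_congr e1, ← ind_mul_ind, ind_congr e2, ind_congr e3]
  -- Step B : second moment of G
  have stepB : ∑ ε : Fin n → Bool, ∑ δ : Fin n → Bool, (G ε δ) ^ 2
      = ((2:ℝ) ^ n) ^ 2 * TT a c S (j + 1) := by
    have hGsq : ∀ ε δ : Fin n → Bool, (G ε δ) ^ 2
        = ∑ w : Fin n → Bool, ∑ w' : Fin n → Bool,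
            ind (AA a c S (j + 1) (ov I ε w) (ov I δ w')) := by
      intro ε δ
      rw [sq, hG]
      rw [Finset.sum_mul_sum]
      exact Finset.sum_congr rfl (fun w _ =>
        Finset.sum_congr rfl (fun w' _ => hpoint ε δ w w'))
    calc ∑ ε : Fin n → Bool, ∑ δ : Fin n → Bool, (G ε δ) ^ 2
        = ∑ ε : Fin n → Bool, ∑ δ : Fin n → Bool, ∑ w : Fin n → Bool, ∑ w' : Fin n → Bool,
            ind (AA a c S (j + 1) (ov I ε w) (ov I δ w')) := by
          exact Finset.sum_congr rfl (fun ε _ =>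
            Finset.sum_congr rfl (fun δ _ => hGsq ε δ))
      _ = ∑ ε : Fin n → Bool, ∑ w : Fin n → Bool, ∑ δ : Fin n → Bool, ∑ w' : Fin n → Bool,
            ind (AA a c S (j + 1) (ov I ε w) (ov I δ w')) := by
          exact Finset.sum_congr rfl (fun ε _ => Finset.sum_comm)
      _ = ∑ ε : Fin n → Bool, ∑ w : Fin n → Bool,
            2 ^ n * ∑ β : Fin n → Bool, ind (AA a c S (j + 1) (ov I ε w) β) := by
          exact Finset.sum_congr rfl (fun ε _ => Finset.sum_congr rfl (fun w _ =>
            sum_ov I (fun β => ind (AA a c S (j + 1) (ov I ε w) β))))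
      _ = 2 ^ n * ∑ ε : Fin n → Bool, ∑ w : Fin n → Bool,
            (∑ β : Fin n → Bool, ind (AA a c S (j + 1) (ov I ε w) β)) := by
          simp only [← Finset.mul_sum]
      _ = 2 ^ n * (2 ^ n * ∑ α : Fin n → Bool,
            (∑ β : Fin n → Bool, ind (AA a c S (j + 1) α β))) := by
          rw [sum_ov I (fun α => ∑ β : Fin n → Bool, ind (AA a c S (j + 1) α β))]
      _ = ((2:ℝ) ^ n) ^ 2 * TT a c S (j + 1) := by
          unfold TT
          ring
  -- Cauchy–Schwarz
  have stepC := double_CS G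
  -- combine
  have hcomb : (2 ^ n * TT a c S j) ^ 2
      ≤ ((2:ℝ) ^ n) ^ 2 * (((2:ℝ) ^ n) ^ 2 * TT a c S (j + 1)) := by
    rw [← stepA, ← stepB]
    exact stepC
  have hpos : (0:ℝ) < ((2:ℝ) ^ n) ^ 2 := by positivity
  nlinarith [hcomb, hpos]

end Step

section Final

variable {m : ℕ}
variable (a : Fin n → EuclideanSpace ℝ (Fin d)) (c : Fin n → Fin m)
  (S : Set (EuclideanSpace ℝ (Fin d)))

set_option maxHeartbeats 1000000 in
lemma TT_final (hm : 1 ≤ m)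
    (hS : ¬ ∃ (b : EuclideanSpace ℝ (Fin d)) (v : Fin m → EuclideanSpace ℝ (Fin d)),
        (∀ i, v i ≠ 0) ∧
        ∀ ε : Fin m → Bool, (b + ∑ i, (if ε i then v i else 0)) ∈ S)
    (q : ℝ) (hq : ∀ k : Fin m, rhoOn a (part c k) ≤ q) (hq0 : 0 ≤ q) :
    TT a c S (m - 1) ≤ m * q * ((2:ℝ) ^ n) ^ 2 := by
  set last : Fin m := ⟨m - 1, by omega⟩ with hlast
  set L := part c last with hL
  set D : (Fin n → Bool) → (Fin n → Bool) → Prop :=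
    fun ε δ => ∀ k : Fin m, k ≠ last → XS a c k δ ≠ XS a c k ε with hD
  set B : (Fin n → Bool) → (Fin n → Bool) → Prop :=
    fun ε δ => AA a c S (m - 1) ε δ ∧ D ε δ with hB
  -- the box claim
  have hbox : ∀ (α α' δ : Fin n → Bool), (∀ i, i ∉ L → α i = α' i) →
      B α δ → B α' δ → XS a c last α' = XS a c last α := by
    intro α α' δ hagree h1 h2
    by_contra hne
    apply hS
    refine ⟨∑ k, XS a c k α,
      fun k => if k = last then XS a c last α' - XS a c last α
        else XS a c k δ - XS a c k α, ?_, ?_⟩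
    · intro k
      by_cases hk : k = last
      · simp only [hk, if_pos rfl]
        exact sub_ne_zero.2 hne
      · simp only [if_neg hk]
        exact sub_ne_zero.2 (h1.2 k hk)
    · intro β
      have hexp : ((∑ k, XS a c k α) + ∑ k, (if β k then
            (if k = last then XS a c last α' - XS a c last α
              else XS a c k δ - XS a c k α) else 0))
          = ∑ k, (if k = last then (if β k then XS a c last α' else XS a c last α)
              else (if β k then XS a c k δ else XS a c k α)) := by
        rw [← Finset.sum_add_distrib]
        apply Finset.sum_congr rfl
        intro k _
        by_cases hk : k = last
        · by_cases hβ : β last = true <;> simp [hk, hβ] <;> abel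
        · by_cases hβ : β k = true <;> simp [hk, hβ] <;> abel
      rw [hexp]
      set b'' : Fin m → Bool := fun k => β k && !(decide (k = last)) with hb''
      have hb''sup : ∀ k : Fin m, b'' k = true → (k : ℕ) < m - 1 := by
        intro k hk
        rw [hb''] at hk
        simp only [Bool.and_eq_true, Bool.not_eq_true'] at hk
        have hkne : k ≠ last := by
          intro hc
          rw [hc] at hk
          simp at hk
        have h4 : (k : ℕ) ≠ m - 1 := by
          intro hc
          exact hkne (Fin.ext (by rw [hc]))
        have := k.isLt
        omega
      by_cases hβl : β last = true
      · have hmem := h2.1 b'' hb''sup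
        have heq : radSum a (Hyb c α' δ b'')
            = ∑ k, (if k = last then (if β k then XS a c last α' else XS a c last α)
                else (if β k then XS a c k δ else XS a c k α)) := by
          rw [radSum_Hyb]
          apply Finset.sum_congr rfl
          intro k _
          by_cases hk : k = last
          · have : b'' k = false := by rw [hb'', hk]; simp
            rw [this, hk, if_pos rfl, hβl]
            simp
          · have : b'' k = β k := by rw [hb'']; simp [hk]
            rw [this, if_neg hk]
            by_cases hβ : β k
            · simp [hβ]
            · simp only [hβ, if_false, Bool.false_eq_true, if_neg]
              apply XS_congr
              intro i hci
              have hni : i ∉ L := by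
                rw [hL, part, Finset.mem_filter]
                rintro ⟨-, hc2⟩
                exact hk (by rw [← hci, hc2])
              exact (hagree i hni).symm
        rwa [heq] at hmem
      · have hmem := h1.1 b'' hb''sup
        have heq : radSum a (Hyb c α δ b'')
            = ∑ k, (if k = last then (if β k then XS a c last α' else XS a c last α)
                else (if β k then XS a c k δ else XS a c k α)) := by
          rw [radSum_Hyb]
          apply Finset.sum_congr rfl
          intro k _
          by_cases hk : k = last
          · have : b'' k = false := by rw [hb'', hk]; simp
            rw [this, hk, if_pos rfl]
            simp [hβl]
          · have : b'' k = β k := by rw [hb'']; simp [hk]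
            rw [this, if_neg hk]
            by_cases hβ : β k <;> simp [hβ]
        rwa [heq] at hmem
  -- per-δ bound on the distinct part
  have hXlast : ∀ ε γ : Fin n → Bool, XS a c last (ov L ε γ) = XS a c last γ := by
    intro ε γ
    apply XS_congr
    intro i hci
    apply ov_mem
    rw [hL, part, Finset.mem_filter]
    exact ⟨Finset.mem_univ _, hci⟩
  have hcard_last : ∀ x, ((Finset.univ.filter (fun γ : Fin n → Bool =>
      XS a c last γ = x)).card : ℝ) ≤ q * 2 ^ n := by
    intro x
    calc ((Finset.univ.filter (fun γ : Fin n → Bool => XS a c last γ = x)).card : ℝ)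
        ≤ rhoOn a (part c last) * 2 ^ n := card_atom_le a (part c last) x
      _ ≤ q * 2 ^ n := by
          apply mul_le_mul_of_nonneg_right (hq last) (by positivity)
  have hBsum : ∀ δ, ∑ ε : Fin n → Bool, ind (B ε δ) ≤ q * 2 ^ n := by
    intro δ
    have h1 : (2:ℝ) ^ n * ∑ ε : Fin n → Bool, ind (B ε δ)
        = ∑ ε : Fin n → Bool, ∑ γ : Fin n → Bool, ind (B (ov L ε γ) δ) :=
      (sum_ov L (fun α => ind (B α δ))).symm
    have h2 : ∀ ε : Fin n → Bool, ∑ γ : Fin n → Bool, ind (B (ov L ε γ) δ) ≤ q * 2 ^ n := by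
      intro ε
      by_cases hex : ∃ γ₀, B (ov L ε γ₀) δ
      · obtain ⟨γ₀, hγ₀⟩ := hex
        have hkey : ∀ γ, B (ov L ε γ) δ → XS a c last γ = XS a c last γ₀ := by
          intro γ hγ
          have hagree : ∀ i, i ∉ L → (ov L ε γ₀) i = (ov L ε γ) i := by
            intro i hi
            rw [ov_not_mem hi, ov_not_mem hi]
          have hb2 := hbox (ov L ε γ₀) (ov L ε γ) δ hagree hγ₀ hγ
          rw [hXlast ε γ, hXlast ε γ₀] at hb2
          exact hb2
        calc ∑ γ : Fin n → Bool, ind (B (ov L ε γ) δ)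
            ≤ ∑ γ : Fin n → Bool, ind (XS a c last γ = XS a c last γ₀) :=
              Finset.sum_le_sum (fun γ _ => ind_mono (hkey γ))
          _ = ((Finset.univ.filter (fun γ : Fin n → Bool =>
                XS a c last γ = XS a c last γ₀)).card : ℝ) := by
                  convert sum_ind (fun γ => XS a c last γ = XS a c last γ₀)
          _ ≤ q * 2 ^ n := hcard_last _
      · push_neg at hex
        have : ∀ γ : Fin n → Bool, ind (B (ov L ε γ) δ) = 0 := by
          intro γ
          simp [ind, hex γ]
        rw [Finset.sum_congr rfl (fun γ _ => this γ), Finset.sum_const_zero]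
        positivity
    have h3 : (2:ℝ) ^ n * ∑ ε : Fin n → Bool, ind (B ε δ) ≤ 2 ^ n * (q * 2 ^ n) := by
      rw [h1]
      calc ∑ ε : Fin n → Bool, ∑ γ : Fin n → Bool, ind (B (ov L ε γ) δ)
          ≤ ∑ _ε : Fin n → Bool, q * 2 ^ n := Finset.sum_le_sum (fun ε _ => h2 ε)
        _ = 2 ^ n * (q * 2 ^ n) := by
            rw [Finset.sum_const, Finset.card_univ, nsmul_eq_mul, card_V]
    exact le_of_mul_le_mul_left h3 (by positivity)
  -- pointwise decomposition
  have hpt : ∀ ε δ : Fin n → Bool, ind (AA a c S (m - 1) ε δ)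
      ≤ ind (B ε δ) + ∑ k ∈ Finset.univ.erase last,
          ind (radSum a ε ∈ S ∧ XS a c k δ = XS a c k ε) := by
    intro ε δ
    have hsumnn : (0:ℝ) ≤ ∑ k ∈ Finset.univ.erase last,
        ind (radSum a ε ∈ S ∧ XS a c k δ = XS a c k ε) :=
      Finset.sum_nonneg (fun _ _ => ind_nonneg)
    by_cases hA : AA a c S (m - 1) ε δ
    · by_cases hDh : D ε δ
      · have hBone : ind (B ε δ) = 1 := by
          rw [hB]
          simp only [ind]
          rw [if_pos ⟨hA, hDh⟩]
        calc ind (AA a c S (m - 1) ε δ) ≤ 1 := ind_le_one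
          _ = ind (B ε δ) := hBone.symm
          _ ≤ _ := le_add_of_nonneg_right hsumnn
      · have hDh' : ∃ k : Fin m, k ≠ last ∧ XS a c k δ = XS a c k ε := by
          by_contra hcon
          push_neg at hcon
          exact hDh (fun k hk => hcon k hk)
        obtain ⟨k, hkne, hkeq⟩ := hDh'
        have hF : radSum a ε ∈ S := AA_imp_F a c S hA
        have hone : ind (radSum a ε ∈ S ∧ XS a c k δ = XS a c k ε) = 1 := by
          simp only [ind]
          rw [if_pos ⟨hF, hkeq⟩]
        have hsum1 : (1:ℝ) ≤ ∑ k' ∈ Finset.univ.erase last,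
            ind (radSum a ε ∈ S ∧ XS a c k' δ = XS a c k' ε) := by
          rw [← hone]
          exact Finset.single_le_sum
            (f := fun k' : Fin m => ind (radSum a ε ∈ S ∧ XS a c k' δ = XS a c k' ε))
            (fun _ _ => ind_nonneg) (Finset.mem_erase.2 ⟨hkne, Finset.mem_univ _⟩)
        have h5 : ind (AA a c S (m - 1) ε δ) ≤ 1 := ind_le_one
        have h6 : (0:ℝ) ≤ ind (B ε δ) := ind_nonneg
        linarith
    · have : ind (AA a c S (m - 1) ε δ) = 0 := by simp [ind, hA]
      rw [this]
      exact add_nonneg ind_nonneg hsumnn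
  -- term 1 bound
  have hterm1 : ∀ k : Fin m, ∑ ε : Fin n → Bool, ∑ δ : Fin n → Bool,
      ind (radSum a ε ∈ S ∧ XS a c k δ = XS a c k ε) ≤ q * ((2:ℝ) ^ n) ^ 2 := by
    intro k
    have hcard_k : ∀ x, ((Finset.univ.filter (fun δ : Fin n → Bool =>
        XS a c k δ = x)).card : ℝ) ≤ q * 2 ^ n := by
      intro x
      calc ((Finset.univ.filter (fun δ : Fin n → Bool => XS a c k δ = x)).card : ℝ)
          ≤ rhoOn a (part c k) * 2 ^ n := card_atom_le a (part c k) x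
        _ ≤ q * 2 ^ n := mul_le_mul_of_nonneg_right (hq k) (by positivity)
    have hinner : ∀ ε : Fin n → Bool, ∑ δ : Fin n → Bool,
        ind (radSum a ε ∈ S ∧ XS a c k δ = XS a c k ε) ≤ q * 2 ^ n := by
      intro ε
      calc ∑ δ : Fin n → Bool, ind (radSum a ε ∈ S ∧ XS a c k δ = XS a c k ε)
          ≤ ∑ δ : Fin n → Bool, ind (XS a c k δ = XS a c k ε) :=
            Finset.sum_le_sum (fun δ _ => ind_mono (fun h => h.2))
        _ = ((Finset.univ.filter (fun δ : Fin n → Bool =>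
              XS a c k δ = XS a c k ε)).card : ℝ) := by
                convert sum_ind (fun δ => XS a c k δ = XS a c k ε)
        _ ≤ q * 2 ^ n := hcard_k _
    calc ∑ ε : Fin n → Bool, ∑ δ : Fin n → Bool,
        ind (radSum a ε ∈ S ∧ XS a c k δ = XS a c k ε)
        ≤ ∑ _ε : Fin n → Bool, q * 2 ^ n := Finset.sum_le_sum (fun ε _ => hinner ε)
      _ = 2 ^ n * (q * 2 ^ n) := by
          rw [Finset.sum_const, Finset.card_univ, nsmul_eq_mul, card_V]
      _ = q * ((2:ℝ) ^ n) ^ 2 := by ring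
  -- assemble
  have hmain : TT a c S (m - 1)
      ≤ (∑ ε : Fin n → Bool, ∑ δ : Fin n → Bool, ind (B ε δ))
        + ∑ k ∈ Finset.univ.erase last, ∑ ε : Fin n → Bool, ∑ δ : Fin n → Bool,
            ind (radSum a ε ∈ S ∧ XS a c k δ = XS a c k ε) := by
    unfold TT
    calc ∑ ε : Fin n → Bool, ∑ δ : Fin n → Bool, ind (AA a c S (m - 1) ε δ)
        ≤ ∑ ε : Fin n → Bool, ∑ δ : Fin n → Bool, (ind (B ε δ)
            + ∑ k ∈ Finset.univ.erase last,
                ind (radSum a ε ∈ S ∧ XS a c k δ = XS a c k ε)) :=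
          Finset.sum_le_sum (fun ε _ => Finset.sum_le_sum (fun δ _ => hpt ε δ))
      _ = (∑ ε : Fin n → Bool, ∑ δ : Fin n → Bool, ind (B ε δ))
          + ∑ ε : Fin n → Bool, ∑ δ : Fin n → Bool, ∑ k ∈ Finset.univ.erase last,
              ind (radSum a ε ∈ S ∧ XS a c k δ = XS a c k ε) := by
            rw [← Finset.sum_add_distrib]
            apply Finset.sum_congr rfl
            intro ε _
            rw [← Finset.sum_add_distrib]
      _ = (∑ ε : Fin n → Bool, ∑ δ : Fin n → Bool, ind (B ε δ))
          + ∑ k ∈ Finset.univ.erase last, ∑ ε : Fin n → Bool, ∑ δ : Fin n → Bool,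
              ind (radSum a ε ∈ S ∧ XS a c k δ = XS a c k ε) := by
            congr 1
            calc ∑ ε : Fin n → Bool, ∑ δ : Fin n → Bool, ∑ k ∈ Finset.univ.erase last,
                  ind (radSum a ε ∈ S ∧ XS a c k δ = XS a c k ε)
                = ∑ ε : Fin n → Bool, ∑ k ∈ Finset.univ.erase last, ∑ δ : Fin n → Bool,
                    ind (radSum a ε ∈ S ∧ XS a c k δ = XS a c k ε) :=
                  Finset.sum_congr rfl (fun ε _ => Finset.sum_comm)
              _ = ∑ k ∈ Finset.univ.erase last, ∑ ε : Fin n → Bool, ∑ δ : Fin n → Bool,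
                    ind (radSum a ε ∈ S ∧ XS a c k δ = XS a c k ε) :=
                  Finset.sum_comm
  have hBtot : ∑ ε : Fin n → Bool, ∑ δ : Fin n → Bool, ind (B ε δ)
      ≤ q * ((2:ℝ) ^ n) ^ 2 := by
    rw [Finset.sum_comm]
    calc ∑ δ : Fin n → Bool, ∑ ε : Fin n → Bool, ind (B ε δ)
        ≤ ∑ _δ : Fin n → Bool, q * 2 ^ n := Finset.sum_le_sum (fun δ _ => hBsum δ)
      _ = 2 ^ n * (q * 2 ^ n) := by
          rw [Finset.sum_const, Finset.card_univ, nsmul_eq_mul, card_V]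
      _ = q * ((2:ℝ) ^ n) ^ 2 := by ring
  have hcardlast : ((Finset.univ.erase last).card : ℝ) = (m : ℝ) - 1 := by
    rw [Finset.card_erase_of_mem (Finset.mem_univ _), Finset.card_univ, Fintype.card_fin]
    push_cast [Nat.cast_sub hm]
    ring
  calc TT a c S (m - 1)
      ≤ (∑ ε : Fin n → Bool, ∑ δ : Fin n → Bool, ind (B ε δ))
        + ∑ k ∈ Finset.univ.erase last, ∑ ε : Fin n → Bool, ∑ δ : Fin n → Bool,
            ind (radSum a ε ∈ S ∧ XS a c k δ = XS a c k ε) := hmain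
    _ ≤ q * ((2:ℝ) ^ n) ^ 2 + ∑ _k ∈ Finset.univ.erase last, q * ((2:ℝ) ^ n) ^ 2 :=
        add_le_add hBtot (Finset.sum_le_sum (fun k _ => hterm1 k))
    _ = q * ((2:ℝ) ^ n) ^ 2 + ((m : ℝ) - 1) * (q * ((2:ℝ) ^ n) ^ 2) := by
        rw [Finset.sum_const, nsmul_eq_mul, hcardlast]
    _ = m * q * ((2:ℝ) ^ n) ^ 2 := by ring

end Final

section Assemble

variable {m : ℕ}
variable (a : Fin n → EuclideanSpace ℝ (Fin d)) (c : Fin n → Fin m)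
  (S : Set (EuclideanSpace ℝ (Fin d)))

lemma TT_nonneg (j : ℕ) : 0 ≤ TT a c S j := by
  unfold TT
  apply Finset.sum_nonneg
  intro ε _
  apply Finset.sum_nonneg
  intro δ _
  exact ind_nonneg

lemma prob_pow_le (hm : 1 ≤ m)
    (hS : ¬ ∃ (b : EuclideanSpace ℝ (Fin d)) (v : Fin m → EuclideanSpace ℝ (Fin d)),
        (∀ i, v i ≠ 0) ∧
        ∀ ε : Fin m → Bool, (b + ∑ i, (if ε i then v i else 0)) ∈ S)
    (q : ℝ) (hq : ∀ k : Fin m, rhoOn a (part c k) ≤ q) (hq0 : 0 ≤ q) :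
    rprob (fun ε => radSum a ε ∈ S) ^ (2 ^ (m - 1)) ≤ m * q := by
  set p := rprob (fun ε => radSum a ε ∈ S) with hp
  have hp0 : 0 ≤ p := rprob_nonneg _
  have hN : (0:ℝ) < 2 ^ n := by positivity
  have hind : ∀ j : ℕ, j ≤ m - 1 → p ^ (2 ^ j) ≤ TT a c S j / ((2:ℝ) ^ n) ^ 2 := by
    intro j
    induction j with
    | zero =>
      intro _
      rw [pow_zero, pow_one, TT_zero]
      apply le_of_eq
      rw [hp]
      unfold rprob
      field_simp
    | succ j ih =>
      intro hj1
      have hjm : j ≤ m - 1 := by omega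
      have hjlt : j < m := by omega
      have h1 := ih hjm
      have h2 : (TT a c S j) ^ 2 ≤ ((2:ℝ) ^ n) ^ 2 * TT a c S (j + 1) :=
        TT_step a c S ⟨j, hjlt⟩
      have h3 : p ^ (2 ^ (j + 1)) = (p ^ (2 ^ j)) ^ 2 := by
        rw [← pow_mul, pow_succ]
      rw [h3]
      calc (p ^ (2 ^ j)) ^ 2 ≤ (TT a c S j / ((2:ℝ) ^ n) ^ 2) ^ 2 := by
            apply pow_le_pow_left₀ (by positivity) h1
        _ = (TT a c S j) ^ 2 / (((2:ℝ) ^ n) ^ 2) ^ 2 := by rw [div_pow]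
        _ ≤ (((2:ℝ) ^ n) ^ 2 * TT a c S (j + 1)) / (((2:ℝ) ^ n) ^ 2) ^ 2 :=
            (div_le_div_iff_of_pos_right (by positivity)).2 h2
        _ = TT a c S (j + 1) / ((2:ℝ) ^ n) ^ 2 := by
            field_simp
  have hfin := hind (m - 1) (le_refl _)
  have hTf := TT_final a c S hm hS q hq hq0
  calc p ^ (2 ^ (m - 1)) ≤ TT a c S (m - 1) / ((2:ℝ) ^ n) ^ 2 := hfin
    _ ≤ (m * q * ((2:ℝ) ^ n) ^ 2) / ((2:ℝ) ^ n) ^ 2 := (div_le_div_iff_of_pos_right (by positivity)).2 hTf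
    _ = m * q := by field_simp

lemma split_lemma' (hm : 1 ≤ m) (I : Finset (Fin n)) (t : ℝ) (ht0 : 0 < t)
    (ht1 : 2 * t < 1) (hI : rhoOn a I ≤ t ^ m) :
    ∃ J : Fin m → Finset (Fin n),
      (∀ p q, p ≠ q → Disjoint (J p) (J q)) ∧ (∀ i ∈ I, ∃ p, i ∈ J p) ∧
      (∀ p, J p ⊆ I) ∧ (∀ p, rhoOn a (J p) ≤ 2 * t) := by
  obtain ⟨k', rfl⟩ : ∃ k', m = k' + 1 := ⟨m - 1, by omega⟩
  exact split_lemma a k' I t ht0 ht1 hI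

lemma exists_coloring (J : Fin m → Finset (Fin n))
    (hdisj : ∀ p q, p ≠ q → Disjoint (J p) (J q)) (hcov : ∀ i, ∃ p, i ∈ J p) :
    ∃ c : Fin n → Fin m, ∀ k, part c k = J k := by
  choose f hf using hcov
  refine ⟨f, ?_⟩
  intro k
  ext i
  rw [part, Finset.mem_filter]
  simp only [Finset.mem_univ, true_and]
  constructor
  · intro h
    rw [← h]
    exact hf i
  · intro h
    by_contra hne
    exact Finset.disjoint_left.1 (hdisj (f i) k hne) (hf i) h

end Assemble

end Stmt12Aux

theorem stmt12 (m : ℕ) (hm : 1 ≤ m) :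
    ∃ C : ℝ, 0 < C ∧ ∀ (d n : ℕ) (S : Set (EuclideanSpace ℝ (Fin d))),
      (¬ ∃ (b : EuclideanSpace ℝ (Fin d)) (v : Fin m → EuclideanSpace ℝ (Fin d)),
        (∀ i, v i ≠ 0) ∧
        ∀ ε : Fin m → Bool, (b + ∑ i, (if ε i then v i else 0)) ∈ S) →
      ∀ a : Fin n → EuclideanSpace ℝ (Fin d), (∀ i, a i ≠ 0) →
        rprob (fun ε => radSum a ε ∈ S) ≤
          C * (rhoOn a Finset.univ) ^ ((1 : ℝ) / ((m : ℝ) * 2 ^ (m - 1))) := by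
  classical
  open Stmt12Aux in
  refine ⟨2 * m + 4, by positivity, ?_⟩
  intro d n S hS a _
  set ρ := rhoOn a Finset.univ with hρdef
  have hρ0 : 0 < ρ := rhoOn_pos a _
  have hρ1 : ρ ≤ 1 := rhoOn_le_one a _
  set α : ℝ := (1 : ℝ) / ((m : ℝ) * 2 ^ (m - 1)) with hα
  have hm0 : (0:ℝ) < (m:ℝ) := by exact_mod_cast hm
  have h2m : (0:ℝ) < (2:ℝ) ^ (m - 1) := by positivity
  have hα0 : 0 < α := by rw [hα]; positivity
  have h2mge : (1:ℝ) ≤ (2:ℝ) ^ (m - 1) := one_le_pow₀ (by norm_num)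
  have hmge : (1:ℝ) ≤ (m:ℝ) := by exact_mod_cast hm
  have hα1 : α ≤ 1 := by
    rw [hα, div_le_one (by positivity)]
    nlinarith
  set p := rprob (fun ε => radSum a ε ∈ S) with hpdef
  have hp0 : 0 ≤ p := rprob_nonneg _
  have hp1 : p ≤ 1 := rprob_le_one _
  have hρα0 : 0 < ρ ^ α := Real.rpow_pos_of_pos hρ0 α
  by_cases hbig : ρ < (1/4 : ℝ) ^ m
  · -- anti-concentrated regime
    set t := ρ ^ ((1:ℝ) / m) with htdef
    have ht0 : 0 < t := Real.rpow_pos_of_pos hρ0 _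
    have htm : t ^ m = ρ := by
      rw [htdef, ← Real.rpow_natCast (ρ ^ ((1:ℝ)/m)) m, ← Real.rpow_mul (le_of_lt hρ0)]
      have h1 : (1:ℝ)/m * m = 1 := by field_simp
      rw [h1, Real.rpow_one]
    have ht14 : t < 1/4 := by
      have h1 := Real.rpow_lt_rpow (le_of_lt hρ0) hbig (by positivity : (0:ℝ) < 1/(m:ℝ))
      have h2 : ((1/4:ℝ) ^ m) ^ ((1:ℝ)/m) = 1/4 := by
        rw [← Real.rpow_natCast (1/4:ℝ) m, ← Real.rpow_mul (by norm_num)]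
        have h3 : (m:ℝ) * ((1:ℝ)/m) = 1 := by field_simp
        rw [h3, Real.rpow_one]
      rw [← h2]
      exact h1
    have ht1 : 2 * t < 1 := by linarith
    obtain ⟨J, hdisj, hcov, hsub, hrhoJ⟩ :=
      split_lemma' a hm Finset.univ t ht0 ht1 (le_of_eq (htm ▸ hρdef))
    obtain ⟨c, hc⟩ := exists_coloring J hdisj (fun i => hcov i (Finset.mem_univ i))
    have hq : ∀ k : Fin m, rhoOn a (part c k) ≤ 2 * t := by
      intro k
      rw [hc k]
      exact hrhoJ k
    have hppow : p ^ (2 ^ (m - 1)) ≤ (m:ℝ) * (2 * t) :=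
      prob_pow_le a c S hm hS (2 * t) hq (by positivity)
    set N : ℕ := 2 ^ (m - 1) with hNdef
    have hNcast : ((N:ℕ):ℝ) = (2:ℝ) ^ (m - 1) := by
      rw [hNdef]
      push_cast
      ring
    have hNne : ((N:ℕ):ℝ) ≠ 0 := by rw [hNcast]; positivity
    have hroot : p ≤ ((m:ℝ) * (2 * t)) ^ ((1:ℝ)/(N:ℝ)) := by
      have h1 : p = (p ^ N) ^ ((1:ℝ)/(N:ℝ)) := by
        rw [← Real.rpow_natCast p N, ← Real.rpow_mul hp0]
        rw [mul_one_div, div_self hNne, Real.rpow_one]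
      rw [h1]
      exact Real.rpow_le_rpow (by positivity) hppow (by positivity)
    have hsplitmul : ((m:ℝ) * (2 * t)) ^ ((1:ℝ)/(N:ℝ))
        = ((2:ℝ) * m) ^ ((1:ℝ)/(N:ℝ)) * t ^ ((1:ℝ)/(N:ℝ)) := by
      rw [← Real.mul_rpow (by positivity) (le_of_lt ht0)]
      ring_nf
    have hcoef : ((2:ℝ) * m) ^ ((1:ℝ)/(N:ℝ)) ≤ 2 * m := by
      have h1 : ((2:ℝ) * m) ^ ((1:ℝ)/(N:ℝ)) ≤ ((2:ℝ) * m) ^ (1:ℝ) := by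
        apply Real.rpow_le_rpow_of_exponent_le (by nlinarith)
        rw [div_le_one (by rw [hNcast]; positivity), hNcast]
        exact h2mge
      rwa [Real.rpow_one] at h1
    have hexpt : t ^ ((1:ℝ)/(N:ℝ)) = ρ ^ α := by
      rw [htdef, ← Real.rpow_mul (le_of_lt hρ0)]
      congr 1
      rw [hα, hNcast]
      field_simp
    calc p ≤ ((m:ℝ) * (2 * t)) ^ ((1:ℝ)/(N:ℝ)) := hroot
      _ = ((2:ℝ) * m) ^ ((1:ℝ)/(N:ℝ)) * t ^ ((1:ℝ)/(N:ℝ)) := hsplitmul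
      _ ≤ (2 * m) * (ρ ^ α) := by
          rw [hexpt]
          apply mul_le_mul_of_nonneg_right hcoef (le_of_lt hρα0)
      _ ≤ (2 * m + 4) * ρ ^ α := by nlinarith
  · -- concentrated regime : trivial bound
    push_neg at hbig
    have h1 : ((1/4:ℝ) ^ m) ^ α ≤ ρ ^ α :=
      Real.rpow_le_rpow (by positivity) hbig (le_of_lt hα0)
    have h2 : ((1/4:ℝ) ^ m) ^ α = (1/4:ℝ) ^ ((m:ℝ) * α) := by
      rw [← Real.rpow_natCast (1/4:ℝ) m, ← Real.rpow_mul (by norm_num)]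
    have h3 : (m:ℝ) * α = 1 / ((2:ℝ) ^ (m - 1)) := by
      rw [hα]
      field_simp
    have h4 : (1/4:ℝ) ≤ (1/4:ℝ) ^ ((m:ℝ) * α) := by
      rw [h3]
      have h5 : (1/4:ℝ) ^ (1:ℝ) ≤ (1/4:ℝ) ^ ((1:ℝ) / ((2:ℝ) ^ (m - 1))) := by
        apply Real.rpow_le_rpow_of_exponent_ge (by norm_num) (by norm_num)
        rw [div_le_one (by positivity)]
        exact h2mge
      rwa [Real.rpow_one] at h5
    have h6 : (1/4:ℝ) ≤ ρ ^ α := le_trans (le_trans h4 (le_of_eq h2.symm)) h1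
    calc p ≤ 1 := hp1
      _ ≤ (2 * m + 4) * (1/4:ℝ) := by nlinarith
      _ ≤ (2 * m + 4) * ρ ^ α := by nlinarith
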